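/- Let n ≥ 1 and let ζ : ℝ → ℝ be a continuous even function with compact support contained in [−R, R] (R > 0), bounded by M := sup_ℝ |ζ|, and satisfying the moment conditions of order n − 1: for every y ∈ ℝ and every integer j with 0 ≤ j ≤ n − 1, ∑_{ξ∈ℤ} ζ(ξ − y)(ξ − y)^j equals 1 if j = 0 and equals 0 if 1 ≤ j ≤ n − 1. Then for every f : ℝ → ℝ which is n times continuously differentiable and every x ∈ ℝ, |f(x) − ∑_{ξ∈ℤ} ζ(x − ξ) f(ξ)| ≤ (2R + 1) · M · (Rⁿ/n!) · sup_{|y − x| ≤ R} |f⁽ⁿ⁾(y)|. -/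

import Mathlib

open Set Finset

private lemma idw_eq {s : Set ℝ} (hs : UniqueDiffOn ℝ s) {f : ℝ → ℝ} {k n : ℕ}
    (hk : k ≤ n) (hf : ContDiff ℝ n f) {x : ℝ} (hx : x ∈ s) :
    iteratedDerivWithin k f s x = iteratedDeriv k f x := by
  have H : HasFTaylorSeriesUpTo (n : ℕ∞) f (ftaylorSeries ℝ f) := by
    rw [← hasFTaylorSeriesUpToOn_univ_iff, ← ftaylorSeriesWithin_univ]
    exact hf.contDiffOn.ftaylorSeriesWithin uniqueDiffOn_univ
  have h2 := (H.hasFTaylorSeriesUpToOn s).eq_iteratedFDerivWithin_of_uniqueDiffOn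
    (by exact_mod_cast hk) hs hx
  rw [iteratedDerivWithin_eq_iteratedFDerivWithin, iteratedDeriv_eq_iteratedFDeriv, ← h2]
  rfl

private lemma tay_right (m : ℕ) (f : ℝ → ℝ) (hf : ContDiff ℝ (m + 1) f) (x y C : ℝ)
    (hxy : x ≤ y) (hC : ∀ t, x ≤ t → t ≤ y → |iteratedDeriv (m + 1) f t| ≤ C) :
    |f y - ∑ j ∈ Finset.range (m + 1),
        iteratedDeriv j f x * (y - x) ^ j / (j.factorial : ℝ)|
      ≤ C * (y - x) ^ (m + 1) / ((m + 1).factorial : ℝ) := by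
  have hC0 : 0 ≤ C := le_trans (abs_nonneg _) (hC x le_rfl hxy)
  rcases eq_or_lt_of_le hxy with rfl | hlt
  · have : ∑ j ∈ Finset.range (m + 1),
        iteratedDeriv j f x * (x - x) ^ j / (j.factorial : ℝ) = f x := by
      rw [Finset.sum_eq_single 0]
      · simp
      · intro b _ hb; simp [zero_pow hb]
      · simp
    rw [this, sub_self, abs_zero, sub_self, zero_pow (Nat.succ_ne_zero m)]
    simp
  · have hud : UniqueDiffOn ℝ (Set.Icc x y) := uniqueDiffOn_Icc hlt
    have hdiff : Differentiable ℝ (iteratedDeriv m f) :=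
      hf.differentiable_iteratedDeriv m (by exact_mod_cast Nat.lt_succ_self m)
    have hfo : ContDiffOn ℝ m f (Set.Icc x y) :=
      (hf.of_le (by exact_mod_cast Nat.le_succ m)).contDiffOn
    have hf' : DifferentiableOn ℝ (iteratedDerivWithin m f (Set.Icc x y)) (Set.Ioo x y) := by
      apply (hdiff.differentiableOn).congr
      intro t ht
      exact idw_eq hud (Nat.le_succ m) hf (Set.mem_Icc_of_Ioo ht)
    have hTL := taylor_mean_remainder_lagrange (n := m) hlt.ne
      (by rwa [Set.uIcc_of_le hxy]) (by rwa [Set.uIcc_of_le hxy, Set.uIoo_of_le hxy])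
    rw [Set.uIcc_of_le hxy, Set.uIoo_of_le hxy] at hTL
    obtain ⟨x', hx', heq⟩ := hTL
    have htay : taylorWithinEval f m (Set.Icc x y) x y
        = ∑ j ∈ Finset.range (m + 1),
            iteratedDeriv j f x * (y - x) ^ j / (j.factorial : ℝ) := by
      rw [taylor_within_apply]
      apply Finset.sum_congr rfl
      intro j hj
      rw [idw_eq hud ((Nat.le_of_lt_succ (Finset.mem_range.mp hj)).trans (Nat.le_succ m))
        hf (Set.left_mem_Icc.mpr hxy)]
      rw [smul_eq_mul]; ring
    rw [← htay, heq]
    have hx'i : x' ∈ Set.Icc x y := Set.mem_Icc_of_Ioo hx'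
    have hidw : iteratedDerivWithin (m + 1) f (Set.Icc x y) x' = iteratedDeriv (m + 1) f x' :=
      idw_eq hud le_rfl hf hx'i
    rw [hidw]
    rw [abs_div, abs_mul]
    have h1 : |iteratedDeriv (m + 1) f x'| ≤ C := hC x' hx'i.1 hx'i.2
    have h2 : |(y - x) ^ (m + 1)| = (y - x) ^ (m + 1) :=
      abs_of_nonneg (pow_nonneg (by linarith) _)
    have h3 : |((m + 1).factorial : ℝ)| = ((m + 1).factorial : ℝ) :=
      abs_of_nonneg (by positivity)
    rw [h2, h3]
    apply div_le_div_of_nonneg_right ?_ (by positivity) |>.trans le_rfl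
    exact mul_le_mul_of_nonneg_right h1 (pow_nonneg (by linarith) _)

private lemma tay_two (m : ℕ) (f : ℝ → ℝ) (hf : ContDiff ℝ (m + 1) f) (x y C : ℝ)
    (hC : ∀ t, |t - x| ≤ |y - x| → |iteratedDeriv (m + 1) f t| ≤ C) :
    |f y - ∑ j ∈ Finset.range (m + 1),
        iteratedDeriv j f x * (y - x) ^ j / (j.factorial : ℝ)|
      ≤ C * |y - x| ^ (m + 1) / ((m + 1).factorial : ℝ) := by
  rcases le_total x y with hxy | hxy
  · have habs : |y - x| = y - x := abs_of_nonneg (by linarith)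
    rw [habs]
    apply tay_right m f hf x y C hxy
    intro t ht1 ht2
    exact hC t (by rw [habs, abs_le]; constructor <;> linarith)
  · -- reflect
    set g : ℝ → ℝ := fun t => f (2 * x + -t) with hg
    have hgc : ContDiff ℝ (m + 1) g :=
      hf.comp ((contDiff_const.add contDiff_neg) : ContDiff ℝ (m+1) fun t : ℝ => 2*x + -t)
    have hgd : ∀ (j : ℕ) (a : ℝ),
        iteratedDeriv j g a = (-1 : ℝ) ^ j * iteratedDeriv j f (2 * x + -a) := by
      intro j a
      have h1 := iteratedDeriv_comp_neg j (fun u => f (2 * x + u)) a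
      have h2 := iteratedDeriv_comp_const_add j f (2 * x)
      have h3 : iteratedDeriv j (fun u => f (2 * x + u)) (-a)
          = iteratedDeriv j f (2 * x + -a) := by rw [h2]
      calc iteratedDeriv j g a = (-1 : ℝ) ^ j • iteratedDeriv j (fun u => f (2 * x + u)) (-a) :=
            h1
        _ = (-1 : ℝ) ^ j * iteratedDeriv j f (2 * x + -a) := by rw [h3, smul_eq_mul]
    have habs : |y - x| = x - y := by rw [abs_sub_comm]; exact abs_of_nonneg (by linarith)
    have key := tay_right m g hgc x (2 * x - y) C (by linarith)
      (by
        intro t ht1 ht2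
        rw [hgd (m + 1) t, abs_mul, abs_pow, abs_neg, abs_one, one_pow, one_mul]
        apply hC
        rw [habs, abs_le]; constructor <;> linarith)
    have e1 : g (2 * x - y) = f y := by
      show f (2 * x + -(2 * x - y)) = f y
      congr 1; ring
    have e2 : ∀ j ∈ Finset.range (m + 1),
        iteratedDeriv j g x * (2 * x - y - x) ^ j / (j.factorial : ℝ)
          = iteratedDeriv j f x * (y - x) ^ j / (j.factorial : ℝ) := by
      intro j _
      have h5 : (-1 : ℝ) ^ j * (2 * x - y - x) ^ j = (y - x) ^ j := by
        rw [← mul_pow]; congr 1; ring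
      rw [hgd j x, show (2 * x + -x) = x by ring,
        mul_comm ((-1 : ℝ) ^ j) (iteratedDeriv j f x), mul_assoc, h5]
    rw [e1, Finset.sum_congr rfl e2] at key
    rw [habs]
    have : (2 * x - y - x) = x - y := by ring
    rw [this] at key
    exact key

private lemma card_bound (R x : ℝ) (hR : 0 < R) :
    ((Finset.Icc ⌈x - R⌉ ⌊x + R⌋).card : ℝ) ≤ 2 * R + 1 := by
  rw [Int.card_Icc]
  rcases le_or_gt (⌊x + R⌋ + 1 - ⌈x - R⌉) 0 with h | h
  · rw [Int.toNat_of_nonpos h]; norm_num; linarith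
  · have := Int.toNat_of_nonneg h.le
    have h1 : ((⌊x + R⌋ + 1 - ⌈x - R⌉).toNat : ℝ) = ((⌊x + R⌋ : ℝ) + 1 - (⌈x - R⌉ : ℝ)) := by
      exact_mod_cast congrArg (Int.cast : ℤ → ℝ) this
    rw [h1]
    have h2 : (⌊x + R⌋ : ℝ) ≤ x + R := Int.floor_le _
    have h3 : x - R ≤ (⌈x - R⌉ : ℝ) := Int.le_ceil _
    linarith

/-- Bramble–Hilbert-type pointwise error bound for the quasi-interpolant
`∑_{ξ∈ℤ} ζ(x − ξ) f(ξ)` built from a basis function satisfying moment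
conditions of order `n − 1`. -/
theorem stmt_7 (n : ℕ) (hn : 1 ≤ n) (R : ℝ) (hR : 0 < R)
    (ζ : ℝ → ℝ) (hζc : Continuous ζ) (hζe : ∀ x, ζ (-x) = ζ x)
    (hζs : ∀ x, x ∉ Set.Icc (-R) R → ζ x = 0)
    (M : ℝ) (hM : ∀ x, |ζ x| ≤ M)
    (hmom : ∀ (y : ℝ) (j : ℕ), j ≤ n - 1 →
      ∑' ξ : ℤ, ζ ((ξ : ℝ) - y) * ((ξ : ℝ) - y) ^ j = if j = 0 then 1 else 0)
    (f : ℝ → ℝ) (hf : ContDiff ℝ n f) (x : ℝ) (C : ℝ)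
    (hC : ∀ y : ℝ, |y - x| ≤ R → |iteratedDeriv n f y| ≤ C) :
    |f x - ∑' ξ : ℤ, ζ (x - (ξ : ℝ)) * f (ξ : ℝ)|
      ≤ (2 * R + 1) * M * (R ^ n / n.factorial) * C := by
  obtain ⟨m, rfl⟩ : ∃ m, n = m + 1 := ⟨n - 1, (Nat.succ_pred_eq_of_pos hn).symm⟩
  have hM0 : 0 ≤ M := le_trans (abs_nonneg _) (hM 0)
  have hC0 : 0 ≤ C := le_trans (abs_nonneg _) (hC x (by simp [hR.le]))
  set S : Finset ℤ := Finset.Icc ⌈x - R⌉ ⌊x + R⌋ with hS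
  -- support facts
  have hmem : ∀ ξ : ℤ, ξ ∈ S ↔ (x - R ≤ (ξ : ℝ) ∧ (ξ : ℝ) ≤ x + R) := by
    intro ξ
    rw [hS, Finset.mem_Icc, Int.ceil_le, Int.le_floor]
  have hsupp : ∀ ξ : ℤ, ξ ∉ S → ζ (x - (ξ : ℝ)) = 0 := by
    intro ξ hξ
    apply hζs
    rw [hmem] at hξ
    push_neg at hξ
    intro hcon
    rw [Set.mem_Icc] at hcon
    rcases le_or_gt (x - R) (ξ : ℝ) with h1 | h1
    · have := hξ h1; linarith [hcon.1]
    · linarith [hcon.2]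
  have hev : ∀ ξ : ℤ, ζ ((ξ : ℝ) - x) = ζ (x - (ξ : ℝ)) := by
    intro ξ
    rw [← hζe (x - (ξ : ℝ))]
    ring_nf
  -- finite sums
  have hsum1 : ∑' ξ : ℤ, ζ (x - (ξ : ℝ)) * f (ξ : ℝ)
      = ∑ ξ ∈ S, ζ (x - (ξ : ℝ)) * f (ξ : ℝ) := by
    apply tsum_eq_sum
    intro b hb
    rw [hsupp b hb, zero_mul]
  have hmomS : ∀ j : ℕ, j ≤ m →
      ∑ ξ ∈ S, ζ (x - (ξ : ℝ)) * ((ξ : ℝ) - x) ^ j = if j = 0 then 1 else 0 := by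
    intro j hj
    have h1 := hmom x j (by simpa using hj)
    rw [← h1]
    symm
    have : ∀ ξ : ℤ, ζ ((ξ : ℝ) - x) * ((ξ : ℝ) - x) ^ j
        = ζ (x - (ξ : ℝ)) * ((ξ : ℝ) - x) ^ j := fun ξ => by rw [hev]
    simp_rw [this]
    apply tsum_eq_sum
    intro b hb
    rw [hsupp b hb, zero_mul]
  -- polynomial reproduction
  set P : ℝ → ℝ := fun y => ∑ j ∈ Finset.range (m + 1),
    iteratedDeriv j f x * (y - x) ^ j / (j.factorial : ℝ) with hP
  have hrepro : ∑ ξ ∈ S, ζ (x - (ξ : ℝ)) * P (ξ : ℝ) = f x := by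
    have : ∀ ξ ∈ S, ζ (x - (ξ : ℝ)) * P (ξ : ℝ)
        = ∑ j ∈ Finset.range (m + 1),
            (iteratedDeriv j f x / (j.factorial : ℝ))
              * (ζ (x - (ξ : ℝ)) * ((ξ : ℝ) - x) ^ j) := by
      intro ξ _
      rw [hP, Finset.mul_sum]
      apply Finset.sum_congr rfl
      intro j _; ring
    rw [Finset.sum_congr rfl this, Finset.sum_comm]
    have : ∀ j ∈ Finset.range (m + 1),
        ∑ ξ ∈ S, (iteratedDeriv j f x / (j.factorial : ℝ))
            * (ζ (x - (ξ : ℝ)) * ((ξ : ℝ) - x) ^ j)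
          = if j = 0 then f x else 0 := by
      intro j hj
      rw [← Finset.mul_sum, hmomS j (Nat.le_of_lt_succ (Finset.mem_range.mp hj))]
      rcases eq_or_ne j 0 with rfl | hj0
      · simp
      · simp [hj0]
    rw [Finset.sum_congr rfl this]
    simp
  -- remainder bound
  have hrem : ∀ ξ ∈ S, |P (ξ : ℝ) - f (ξ : ℝ)|
      ≤ C * R ^ (m + 1) / ((m + 1).factorial : ℝ) := by
    intro ξ hξ
    rw [hmem] at hξ
    have hdist : |(ξ : ℝ) - x| ≤ R := by rw [abs_le]; constructor <;> linarith [hξ.1, hξ.2]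
    have := tay_two m f hf x (ξ : ℝ) C (by
      intro t ht
      exact hC t (le_trans ht hdist))
    rw [abs_sub_comm]
    refine le_trans this ?_
    apply div_le_div_of_nonneg_right ?_ (by positivity)
    exact mul_le_mul_of_nonneg_left
      (pow_le_pow_left₀ (abs_nonneg _) hdist _) hC0
  -- put together
  rw [hsum1, ← hrepro, ← Finset.sum_sub_distrib]
  have hstep : ∀ ξ ∈ S, |ζ (x - (ξ : ℝ)) * P (ξ : ℝ) - ζ (x - (ξ : ℝ)) * f (ξ : ℝ)|
      ≤ M * (C * R ^ (m + 1) / ((m + 1).factorial : ℝ)) := by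
    intro ξ hξ
    rw [← mul_sub, abs_mul]
    exact mul_le_mul (hM _) (hrem ξ hξ) (abs_nonneg _) hM0
  calc |∑ ξ ∈ S, (ζ (x - (ξ : ℝ)) * P (ξ : ℝ) - ζ (x - (ξ : ℝ)) * f (ξ : ℝ))|
      ≤ ∑ ξ ∈ S, |ζ (x - (ξ : ℝ)) * P (ξ : ℝ) - ζ (x - (ξ : ℝ)) * f (ξ : ℝ)| :=
        Finset.abs_sum_le_sum_abs _ _
    _ ≤ ∑ _ξ ∈ S, M * (C * R ^ (m + 1) / ((m + 1).factorial : ℝ)) :=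
        Finset.sum_le_sum hstep
    _ = (S.card : ℝ) * (M * (C * R ^ (m + 1) / ((m + 1).factorial : ℝ))) := by
        rw [Finset.sum_const, nsmul_eq_mul]
    _ ≤ (2 * R + 1) * (M * (C * R ^ (m + 1) / ((m + 1).factorial : ℝ))) := by
        apply mul_le_mul_of_nonneg_right (card_bound R x hR)
        positivity
    _ = (2 * R + 1) * M * (R ^ (m + 1) / ((m + 1).factorial : ℝ)) * C := by ring
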